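/- Let X be a separable infinite-dimensional real Hilbert space with orthonormal basis (eₙ)_{n≥1}, let ηₙ, μₙ ∈ (0,1) satisfy ηₙ² + μₙ² = 1 for all n ≥ 1 with (ηₙ) ∈ ℓ², set zₙ := ηₙ e_{2n−1} − μₙ e_{2n}, c* := Σ_{n≥1} ηₙ e_{2n}, P := {Σ_{n≥1} λₙ zₙ : (λₙ) ∈ ℓ², λₙ ≥ 0 for all n}, L := the closed linear span of {e_{2n−1} : n ≥ 1}, A := the orthogonal projection onto L (viewed as a map X → Y := X), and v(y) := inf{⟨x, c*⟩ : x ∈ P, Ax = y}. Then the dual feasible set {y* ∈ Y : c* − A y* ∈ P⁺} is empty (here A* = A), so v** ≡ −∞ and the lower semicontinuous envelope of v equals −∞ at every point of dom v; consequently v, though proper, is not lower semicontinuous at any y ∈ dom v, and ∂v(b) = ∅ for every b ∈ Y. -/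

import Mathlib

lemma ereal_eq_bot_of_le_coe {a : EReal} (h : ∀ M : ℝ, a ≤ (M : EReal)) : a = ⊥ := by
  by_contra hne
  obtain ⟨M, hM1, hM2⟩ := EReal.exists_between_coe_real (Ne.bot_lt hne)
  exact absurd (h M) (not_le.2 hM2)

set_option maxHeartbeats 2000000 in
/-- In the setting of the Hilbert-space example (same data as in
Statement 11), the dual feasible set `{y* : c* − A y* ∈ P⁺}` is empty (here `A* = A`),
so `v** ≡ −∞` and the lower semicontinuous envelope of `v` (defined through the closure
of the epigraph) equals `−∞` at every point of `dom v`; consequently `v`, though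
proper, is lower semicontinuous at no point of `dom v`, and `∂v(b) = ∅` for all `b`. -/
theorem stmt12 {X : Type*} [NormedAddCommGroup X] [InnerProductSpace ℝ X]
    [CompleteSpace X]
    (b : HilbertBasis ℕ ℝ X)
    (η μ : ℕ → ℝ) (hη : ∀ n, η n ∈ Set.Ioo (0 : ℝ) 1) (hμ : ∀ n, μ n ∈ Set.Ioo (0 : ℝ) 1)
    (hημ : ∀ n, η n ^ 2 + μ n ^ 2 = 1) (hη2 : Summable (fun n => η n ^ 2))
    (z : ℕ → X) (hz : ∀ n, z n = η n • b (2 * n) - μ n • b (2 * n + 1))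
    (cstar : X) (hc : HasSum (fun n => η n • b (2 * n + 1)) cstar)
    (P : Set X)
    (hP : P = {x : X | ∃ l : ℕ → ℝ, (∀ n, 0 ≤ l n) ∧ Summable (fun n => l n ^ 2) ∧
      HasSum (fun n => l n • z n) x})
    (L : Submodule ℝ X)
    (hL : L = (Submodule.span ℝ (Set.range fun n => b (2 * n))).topologicalClosure)
    (A : X → X)
    (hA : ∀ x : X, A x ∈ L ∧ ∀ u ∈ L, (inner ℝ (x - A x) u : ℝ) = 0)
    (v : X → EReal)
    (hv : ∀ y : X, v y = ⨅ (x : X) (_ : x ∈ P ∧ A x = y), ((inner ℝ x cstar : ℝ) : EReal)) :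
    ({ys : X | ∀ p ∈ P, 0 ≤ (inner ℝ p (cstar - A ys) : ℝ)} = ∅) ∧
    (∀ y : X,
      (⨆ ys : X, ((inner ℝ y ys : ℝ) : EReal)
        - (⨆ y' : X, ((inner ℝ y' ys : ℝ) : EReal) - v y')) = ⊥) ∧
    (∀ y : X, v y < ⊤ →
      (⨅ (t : ℝ) (_ : (y, t) ∈ closure {p : X × ℝ | v p.1 ≤ (p.2 : EReal)}),
        (t : EReal)) = ⊥) ∧
    ((∀ y : X, v y ≠ ⊥) ∧ (∃ y : X, v y ≠ ⊤)) ∧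
    (∀ y : X, v y < ⊤ → ¬ LowerSemicontinuousAt v y) ∧
    (∀ bb : X, {ys : X | ∃ r : ℝ, v bb = (r : EReal) ∧
      ∀ y : X, (((inner ℝ (y - bb) ys : ℝ) + r : ℝ) : EReal) ≤ v y} = ∅) := by
  classical
  have hη0 : ∀ n, 0 < η n := fun n => (hη n).1
  have hμ0 : ∀ n, 0 < μ n := fun n => (hμ n).1
  have hbb : ∀ m k, (inner ℝ (b m) (b k) : ℝ) = if m = k then 1 else 0 := by
    have := b.orthonormal; rwa [orthonormal_iff_ite] at this
  -- inner products with cstar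
  have hinner_c : ∀ m : ℕ, (inner ℝ (b m) cstar : ℝ)
      = ∑' n, η n * (inner ℝ (b m) (b (2*n+1)) : ℝ) := by
    intro m
    have h1 : HasSum (fun n => η n * (inner ℝ (b m) (b (2*n+1)) : ℝ)) (inner ℝ (b m) cstar : ℝ) := by
      have := hc.mapL (innerSL ℝ (b m))
      simpa [inner_smul_right] using this
    exact h1.tsum_eq.symm
  have hc_even : ∀ n : ℕ, (inner ℝ (b (2*n)) cstar : ℝ) = 0 := by
    intro n
    rw [hinner_c]
    have h0 : (fun k : ℕ => η k * (inner ℝ (b (2*n)) (b (2*k+1)) : ℝ)) = fun _ => 0 := by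
      funext k; rw [hbb]; simp [show 2*n ≠ 2*k+1 by omega]
    rw [h0, tsum_zero]
  have hc_odd : ∀ n : ℕ, (inner ℝ (b (2*n+1)) cstar : ℝ) = η n := by
    intro n
    rw [hinner_c]
    have heq : (fun k => η k * (inner ℝ (b (2*n+1)) (b (2*k+1)) : ℝ))
        = fun k => if k = n then η n else 0 := by
      funext k; rw [hbb]
      by_cases h : k = n
      · subst h; simp
      · simp [show 2*n+1 ≠ 2*k+1 by omega, h, Ne.symm h]
    rw [heq, tsum_ite_eq]
  have hz_c : ∀ n : ℕ, (inner ℝ (z n) cstar : ℝ) = -(μ n * η n) := by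
    intro n
    rw [hz, inner_sub_left, real_inner_smul_left, real_inner_smul_left, hc_even, hc_odd]
    ring
  -- membership in L
  have hbL : ∀ n : ℕ, b (2*n) ∈ L := by
    intro n
    rw [hL]
    exact Submodule.le_topologicalClosure _ (Submodule.subset_span ⟨n, rfl⟩)
  have hoddL : ∀ n : ℕ, ∀ u ∈ L, (inner ℝ (b (2*n+1)) u : ℝ) = 0 := by
    intro n u hu
    have hle : L ≤ (ℝ ∙ (b (2*n+1)))ᗮ := by
      have hsp : Submodule.span ℝ (Set.range fun k => b (2*k)) ≤ (ℝ ∙ (b (2*n+1)))ᗮ := by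
        rw [Submodule.span_le]
        rintro _ ⟨k, rfl⟩
        rw [SetLike.mem_coe, Submodule.mem_orthogonal_singleton_iff_inner_right, hbb]
        simp [show 2*n+1 ≠ 2*k by omega]
      rw [hL]
      exact Submodule.topologicalClosure_minimal _ hsp (Submodule.isClosed_orthogonal _)
    have := (Submodule.mem_orthogonal_singleton_iff_inner_right).1 (hle hu)
    exact this
  -- characterization of A
  have hA_char : ∀ x w : X, w ∈ L → (∀ u ∈ L, (inner ℝ (x - w) u : ℝ) = 0) → A x = w := by
    intro x w hwL hperp
    have hd : A x - w ∈ L := Submodule.sub_mem L (hA x).1 hwL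
    have h1 : (inner ℝ (A x - w) (A x - w) : ℝ) = 0 := by
      have h2 : (inner ℝ ((x - w) - (x - A x)) (A x - w) : ℝ) = 0 := by
        rw [inner_sub_left, hperp _ hd, (hA x).2 _ hd, sub_zero]
      rwa [show (x - w) - (x - A x) = A x - w by abel] at h2
    exact sub_eq_zero.1 (inner_self_eq_zero.1 h1)
  -- zero is feasible
  have hP0 : (0:X) ∈ P := by
    rw [hP]
    exact ⟨fun _ => 0, fun n => le_rfl, by simpa using summable_zero, by simpa using hasSum_zero⟩
  have hA0 : A 0 = 0 := hA_char 0 0 (Submodule.zero_mem L) (by intro u hu; simp)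
  -- adding nonneg finite combinations of z stays in P
  have hPadd : ∀ x₀ ∈ P, ∀ (F : Finset ℕ) (s : ℕ → ℝ), (∀ n, 0 ≤ s n) →
      x₀ + ∑ n ∈ F, s n • z n ∈ P := by
    intro x₀ hx₀ F s hs
    rw [hP] at hx₀ ⊢
    obtain ⟨l, hl0, hl2, hl3⟩ := hx₀
    refine ⟨fun n => l n + (if n ∈ F then s n else 0), ?_, ?_, ?_⟩
    · intro n
      have := hl0 n; have := hs n
      by_cases h : n ∈ F <;> simp [h] <;> linarith
    · have hg : Summable (fun n => (l n + (if n ∈ F then s n else 0))^2 - l n ^2) := by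
        apply summable_of_ne_finset_zero (s := F)
        intro n hn; simp [hn]
      have := hg.add hl2
      refine this.congr fun n => by ring
    · have h1 : HasSum (fun n => (if n ∈ F then s n • z n else 0))
          (∑ n ∈ F, s n • z n) := by
        have h2 := hasSum_sum_of_ne_finset_zero
          (L := SummationFilter.unconditional ℕ) (s := F) (f := fun n => (if n ∈ F then s n • z n else 0))
          (by intro n hn; simp [hn])
        have h3 : ∑ n ∈ F, (if n ∈ F then s n • z n else 0) = ∑ n ∈ F, s n • z n :=
          Finset.sum_congr rfl fun n hn => by simp [hn]
        rwa [h3] at h2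
      have hfe : (fun n => (l n + (if n ∈ F then s n else 0)) • z n)
          = fun n => l n • z n + (if n ∈ F then s n • z n else 0) := by
        funext n; by_cases h : n ∈ F <;> simp [h, add_smul]
      rw [hfe]
      exact hl3.add h1
  -- the projection of such perturbations
  have hAadd : ∀ (x₀ y : X), A x₀ = y → ∀ (F : Finset ℕ) (s : ℕ → ℝ),
      A (x₀ + ∑ n ∈ F, s n • z n) = y + ∑ n ∈ F, (s n * η n) • b (2*n) := by
    intro x₀ y hx₀ F s
    apply hA_char
    · refine Submodule.add_mem L (hx₀ ▸ (hA x₀).1) ?_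
      exact Submodule.sum_mem L fun n _ => Submodule.smul_mem L _ (hbL n)
    · intro u hu
      have hdiff : (x₀ + ∑ n ∈ F, s n • z n) - (y + ∑ n ∈ F, (s n * η n) • b (2*n))
          = (x₀ - A x₀) + ∑ n ∈ F, (-(s n * μ n)) • b (2*n+1) := by
        rw [← hx₀]
        have : ∀ n ∈ F, s n • z n - (s n * η n) • b (2*n) = (-(s n * μ n)) • b (2*n+1) := by
          intro n _
          rw [hz n, smul_sub, smul_smul, smul_smul, neg_smul]
          abel
        rw [← Finset.sum_congr rfl this, Finset.sum_sub_distrib]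
        abel
      rw [hdiff, inner_add_left, (hA x₀).2 u hu, sum_inner, zero_add]
      refine Finset.sum_eq_zero fun n _ => ?_
      rw [real_inner_smul_left, hoddL n u hu, mul_zero]
  -- the value of such perturbations
  have hval : ∀ (x₀ : X) (F : Finset ℕ) (s : ℕ → ℝ),
      (inner ℝ (x₀ + ∑ n ∈ F, s n • z n) cstar : ℝ)
        = (inner ℝ x₀ cstar : ℝ) - ∑ n ∈ F, s n * (μ n * η n) := by
    intro x₀ F s
    rw [inner_add_left, sum_inner]
    congr 1
    rw [← Finset.sum_neg_distrib]
    refine Finset.sum_congr rfl fun n _ => ?_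
    rw [real_inner_smul_left, hz_c n]; ring
  -- coefficients are determined
  have hcoef : ∀ (l : ℕ → ℝ) (x : X), HasSum (fun n => l n • z n) x →
      ∀ n, (inner ℝ (b (2*n)) x : ℝ) = l n * η n := by
    intro l x hsum n
    have h1 := hsum.mapL (innerSL ℝ (b (2*n)))
    have h2 : (fun k => (innerSL ℝ (b (2*n))) (l k • z k))
        = fun k => if k = n then l n * η n else 0 := by
      funext k
      simp only [innerSL_apply_apply]
      rw [real_inner_smul_right, hz k, inner_sub_right, real_inner_smul_right,
        real_inner_smul_right, hbb, hbb]
      by_cases h : k = n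
      · subst h; simp [mul_comm]
      · simp [h, show 2*n ≠ 2*k by omega, show 2*n ≠ 2*k+1 by omega]
    rw [h2] at h1
    exact (h1.unique (hasSum_ite_eq n (l n * η n)))
  -- feasible point is unique
  have huniq : ∀ (y x x' : X), x ∈ P → x' ∈ P → A x = y → A x' = y → x = x' := by
    intro y x x' hx hx' hAx hAx'
    rw [hP] at hx hx'
    obtain ⟨l, hl0, hl2, hl3⟩ := hx
    obtain ⟨l', hl0', hl2', hl3'⟩ := hx'
    have key : ∀ (w : X), A w = y → ∀ n, (inner ℝ (b (2*n)) w : ℝ) = (inner ℝ (b (2*n)) y : ℝ) := by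
      intro w hw n
      have h0 := (hA w).2 (b (2*n)) (hbL n)
      rw [real_inner_comm] at h0
      rw [inner_sub_right] at h0
      have := sub_eq_zero.1 h0
      rw [this, hw]
    have hll : l = l' := by
      funext n
      have e1 := hcoef l x hl3 n
      have e2 := hcoef l' x' hl3' n
      have e3 : l n * η n = l' n * η n := by
        rw [← e1, ← e2, key x hAx n, key x' hAx' n]
      exact mul_right_cancel₀ (ne_of_gt (hη0 n)) e3
    rw [hll] at hl3
    exact hl3.unique hl3'
  -- value of v at feasible points
  have hv_feas : ∀ (y x₀ : X), x₀ ∈ P → A x₀ = y → v y = ((inner ℝ x₀ cstar : ℝ) : EReal) := by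
    intro y x₀ hx₀ hAx₀
    rw [hv]
    apply le_antisymm
    · exact iInf_le_of_le x₀ (iInf_le_of_le ⟨hx₀, hAx₀⟩ le_rfl)
    · refine le_iInf fun x => le_iInf fun hx => ?_
      rw [huniq y x x₀ hx.1 hx₀ hx.2 hAx₀]
  have hv_infeas : ∀ y : X, (¬ ∃ x, x ∈ P ∧ A x = y) → v y = ⊤ := by
    intro y h
    rw [hv]
    exact iInf_eq_top.2 fun x => iInf_eq_top.2 fun hx => absurd ⟨x, hx⟩ h
  have hfeas : ∀ y : X, v y < ⊤ → ∃ x, x ∈ P ∧ A x = y := by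
    intro y hy
    by_contra h
    rw [hv_infeas y h] at hy
    exact lt_irrefl _ hy
  -- μ is eventually at least 1/2
  have hμhalf : ∃ N : ℕ, ∀ n ≥ N, (1:ℝ)/2 ≤ μ n := by
    have h1 := hη2.tendsto_atTop_zero
    have h2 : ∀ᶠ n in Filter.atTop, η n ^ 2 < 3/4 :=
      h1.eventually (gt_mem_nhds (by norm_num : (0:ℝ) < 3/4))
    obtain ⟨N, hN⟩ := Filter.eventually_atTop.1 h2
    refine ⟨N, fun n hn => ?_⟩
    have := hN n hn
    have hμn := hμ0 n
    nlinarith [hημ n]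
  -- inner products with b (2n) are eventually small
  have hsmall : ∀ (w : X) (ε : ℝ), 0 < ε → ∃ N : ℕ, ∀ n ≥ N, |(inner ℝ (b (2*n)) w : ℝ)| < ε := by
    intro w ε hε
    have h1 : Summable fun i => ‖(inner ℝ (b i) w : ℝ)‖^2 := b.orthonormal.inner_products_summable w
    have h2 := h1.tendsto_atTop_zero
    have h3 : ∀ᶠ i in Filter.atTop, ‖(inner ℝ (b i) w : ℝ)‖^2 < ε^2 :=
      h2.eventually (gt_mem_nhds (by positivity : (0:ℝ) < ε^2))
    obtain ⟨N, hN⟩ := Filter.eventually_atTop.1 h3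
    refine ⟨N, fun n hn => ?_⟩
    have := hN (2*n) (by omega)
    rw [Real.norm_eq_abs] at this
    nlinarith [abs_nonneg (inner ℝ (b (2*n)) w : ℝ), sq_abs (inner ℝ (b (2*n)) w : ℝ)]
  -- selection of a good index
  have hsel : ∀ w : X, ∃ n : ℕ, 0 < (inner ℝ (b (2*n)) w : ℝ) + μ n := by
    intro w
    obtain ⟨N₁, hN₁⟩ := hμhalf
    obtain ⟨N₂, hN₂⟩ := hsmall w (1/2) (by norm_num)
    refine ⟨max N₁ N₂, ?_⟩
    have h1 := hN₁ _ (le_max_left N₁ N₂)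
    have h2 := hN₂ _ (le_max_right N₁ N₂)
    have := abs_lt.1 h2
    linarith [this.1]
  -- orthonormality of the even-indexed family and norms of sums
  have horth2 : Orthonormal ℝ (fun n : ℕ => b (2*n)) :=
    b.orthonormal.comp _ (fun a a' h => by omega)
  have hnorm : ∀ (F : Finset ℕ) (c : ℝ), ‖∑ n ∈ F, c • b (2*n)‖^2 = F.card * c^2 := by
    intro F c
    have h1 := horth2.inner_sum (fun _ => c) (fun _ => c) F
    simp only [starRingEnd_apply, star_trivial] at h1
    rw [← real_inner_self_eq_norm_sq]
    rw [h1, Finset.sum_const, nsmul_eq_mul]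
    ring
  -- the key perturbation lemma
  have hpert : ∀ (y x₀ : X), x₀ ∈ P → A x₀ = y → ∀ (t δ : ℝ), 0 < δ →
      ∃ y' : X, ‖y' - y‖ < δ ∧ v y' ≤ (t : EReal) := by
    intro y x₀ hx₀ hAx₀ t δ hδ
    obtain ⟨N, hN⟩ := hμhalf
    set r₀ : ℝ := (inner ℝ x₀ cstar : ℝ) with hr₀
    set M : ℝ := max (r₀ - t) 0 with hM
    have hM0 : 0 ≤ M := le_max_right _ _
    have hMrt : r₀ - t ≤ M := le_max_left _ _
    obtain ⟨K, hK⟩ := exists_nat_gt ((2*M/δ)^2)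
    set k : ℕ := K + 1 with hk
    have hk0 : 0 < (k:ℝ) := by positivity
    have hkM : (2*M/δ)^2 < (k:ℝ) := by
      refine lt_of_lt_of_le hK ?_
      exact_mod_cast Nat.le_succ K
    set c : ℝ := 2*M/k with hcdef
    have hc0 : 0 ≤ c := by positivity
    have hck : c * k = 2*M := by rw [hcdef, div_mul_cancel₀ _ hk0.ne']
    set F : Finset ℕ := Finset.Ico N (N+k) with hF
    have hcard : F.card = k := by simp [hF]
    set s : ℕ → ℝ := fun n => c / η n with hsdef
    have hs0 : ∀ n, 0 ≤ s n := fun n => div_nonneg hc0 (le_of_lt (hη0 n))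
    have hsη : ∀ n, s n * η n = c := fun n => div_mul_cancel₀ c (ne_of_gt (hη0 n))
    set x : X := x₀ + ∑ n ∈ F, s n • z n with hxdef
    have hxP : x ∈ P := hPadd x₀ hx₀ F s hs0
    have hAx := hAadd x₀ y hAx₀ F s
    set y' : X := y + ∑ n ∈ F, (s n * η n) • b (2*n) with hy'
    refine ⟨y', ?_, ?_⟩
    · have hyy : y' - y = ∑ n ∈ F, c • b (2*n) := by
        rw [hy', add_sub_cancel_left]
        exact Finset.sum_congr rfl fun n _ => by rw [hsη]
      have h2 : ‖y' - y‖^2 = (k:ℝ) * c^2 := by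
        rw [hyy, hnorm F c, hcard]
      have h3 : (k:ℝ) * c^2 < δ^2 := by
        have e1 : (k:ℝ) * c^2 * k = (2*M)^2 := by
          have : (k:ℝ) * c^2 * k = (c*k)^2 := by ring
          rw [this, hck]
        have e2 : (2*M/δ)^2 * δ^2 = (2*M)^2 := by field_simp
        have e3 : (k:ℝ) * ((k:ℝ) * c^2) < (k:ℝ) * δ^2 := by
          have := mul_lt_mul_of_pos_right hkM (by positivity : (0:ℝ) < δ^2)
          nlinarith
        exact lt_of_mul_lt_mul_left e3 (le_of_lt hk0)
      nlinarith [norm_nonneg (y' - y)]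
    · rw [hv_feas y' x hxP hAx]
      have hvalx : (inner ℝ x cstar : ℝ) = r₀ - ∑ n ∈ F, s n * (μ n * η n) :=
        hval x₀ F s
      have hsum : (k:ℝ) * (c/2) ≤ ∑ n ∈ F, s n * (μ n * η n) := by
        have h4 : ∀ n ∈ F, c/2 ≤ s n * (μ n * η n) := by
          intro n hn
          have hn' : N ≤ n := (Finset.mem_Ico.1 hn).1
          have hμn := hN n hn'
          have : s n * (μ n * η n) = c * μ n := by
            rw [show s n * (μ n * η n) = (s n * η n) * μ n by ring, hsη]
          rw [this]
          nlinarith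
        calc (k:ℝ) * (c/2) = ∑ _n ∈ F, c/2 := by
              rw [Finset.sum_const, hcard, nsmul_eq_mul]
          _ ≤ _ := Finset.sum_le_sum h4
      have hkc : (k:ℝ) * (c/2) = M := by
        calc (k:ℝ) * (c/2) = c * k / 2 := by ring
          _ = M := by rw [hck]; ring
      have h5 : M ≤ ∑ n ∈ F, s n * (μ n * η n) := hkc ▸ hsum
      have hle : (inner ℝ x cstar : ℝ) ≤ t := by
        rw [hvalx]; linarith
      exact EReal.coe_le_coe_iff.2 hle
  -- single z-direction feasibility
  have hzPt : ∀ (n : ℕ) (t : ℝ), 0 ≤ t →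
      t • z n ∈ P ∧ A (t • z n) = (t * η n) • b (2*n) := by
    intro n t ht
    have h1 := hPadd 0 hP0 {n} (fun _ => t) (fun _ => ht)
    have h2 := hAadd 0 0 hA0 {n} (fun _ => t)
    simp only [Finset.sum_singleton, zero_add] at h1 h2
    exact ⟨h1, h2⟩
  refine ⟨?_, ?_, ?_, ⟨?_, ?_⟩, ?_, ?_⟩
  · -- dual feasible set empty
    rw [Set.eq_empty_iff_forall_notMem]
    intro ys hys
    obtain ⟨n, hn⟩ := hsel (A ys)
    obtain ⟨hznP, _⟩ := hzPt n 1 zero_le_one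
    rw [one_smul] at hznP
    have h1 := hys (z n) hznP
    have h2 : (inner ℝ (z n) (cstar - A ys) : ℝ)
        = -(μ n * η n) - η n * (inner ℝ (b (2*n)) (A ys) : ℝ) := by
      rw [inner_sub_right, hz_c n, hz n, inner_sub_left, real_inner_smul_left,
        real_inner_smul_left, hoddL n (A ys) (hA ys).1]
      ring
    rw [h2] at h1
    nlinarith [hη0 n, hμ0 n]
  · -- biconjugate is identically ⊥
    intro y
    have hS : ∀ ys : X, (⨆ y' : X, ((inner ℝ y' ys : ℝ) : EReal) - v y') = ⊤ := by
      intro ys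
      rw [iSup_eq_top]
      intro w hw
      obtain ⟨Mr, hM1, hM2⟩ := EReal.exists_between_coe_real hw
      obtain ⟨n, hn⟩ := hsel ys
      have hcpos : 0 < η n * ((inner ℝ (b (2*n)) ys : ℝ) + μ n) := mul_pos (hη0 n) hn
      set cp : ℝ := η n * ((inner ℝ (b (2*n)) ys : ℝ) + μ n) with hcp
      set t : ℝ := max 0 (Mr + 1) / cp with htdef
      have ht0 : 0 ≤ t := div_nonneg (le_max_left _ _) hcpos.le
      have htc : t * cp = max 0 (Mr + 1) := div_mul_cancel₀ _ (ne_of_gt hcpos)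
      obtain ⟨htP, htA⟩ := hzPt n t ht0
      refine ⟨(t * η n) • b (2*n), ?_⟩
      have hvle : v ((t * η n) • b (2*n)) ≤ ((-(t * (μ n * η n)) : ℝ) : EReal) := by
        rw [hv_feas _ _ htP htA]
        apply EReal.coe_le_coe_iff.2
        rw [real_inner_smul_left, hz_c n]
        exact le_of_eq (by ring)
      have hin : (inner ℝ ((t * η n) • b (2*n)) ys : ℝ)
          = t * η n * (inner ℝ (b (2*n)) ys : ℝ) := real_inner_smul_left _ _ _
      have hkey : (Mr : EReal)
          ≤ (((t * η n * (inner ℝ (b (2*n)) ys : ℝ)) - (-(t * (μ n * η n))) : ℝ) : EReal) := by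
        apply EReal.coe_le_coe_iff.2
        have e1 : t * η n * (inner ℝ (b (2*n)) ys : ℝ) - (-(t * (μ n * η n))) = t * cp := by
          rw [hcp]; ring
        rw [e1, htc]
        have := le_max_right (0:ℝ) (Mr + 1)
        linarith
      refine lt_of_lt_of_le hM1 (le_trans hkey ?_)
      rw [EReal.coe_sub, hin]
      exact EReal.sub_le_sub le_rfl hvle
    refine le_antisymm (iSup_le fun ys => ?_) bot_le
    rw [hS ys, EReal.sub_top]
  · -- lsc envelope is ⊥ on dom v
    intro y hlt
    obtain ⟨x₀, hx₀P, hx₀A⟩ := hfeas y hlt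
    have hcl : ∀ t : ℝ, (y, t) ∈ closure {p : X × ℝ | v p.1 ≤ (p.2 : EReal)} := by
      intro t
      rw [Metric.mem_closure_iff]
      intro ε hε
      obtain ⟨y', hy1, hy2⟩ := hpert y x₀ hx₀P hx₀A t ε hε
      refine ⟨(y', t), hy2, ?_⟩
      rw [Prod.dist_eq]
      simp only [dist_self, dist_eq_norm]
      rw [norm_sub_rev]
      simpa using hy1
    apply ereal_eq_bot_of_le_coe
    intro M
    exact iInf_le_of_le M (iInf_le_of_le (hcl M) le_rfl)
  · -- v is never ⊥
    intro y
    by_cases h : ∃ x, x ∈ P ∧ A x = y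
    · obtain ⟨x₀, h1, h2⟩ := h
      rw [hv_feas y x₀ h1 h2]
      exact EReal.coe_ne_bot _
    · rw [hv_infeas y h]
      simp
  · -- v is somewhere finite
    refine ⟨0, ?_⟩
    rw [hv_feas 0 0 hP0 hA0]
    exact EReal.coe_ne_top _
  · -- v is nowhere lsc on dom v
    intro y hlt hlsc
    obtain ⟨x₀, hx₀P, hx₀A⟩ := hfeas y hlt
    have hvy := hv_feas y x₀ hx₀P hx₀A
    have hc2 : (((inner ℝ x₀ cstar : ℝ) - 1 : ℝ) : EReal) < v y := by
      rw [hvy]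
      exact EReal.coe_lt_coe_iff.2 (by linarith)
    have h3 := hlsc _ hc2
    obtain ⟨ε, hε, hball⟩ := Metric.eventually_nhds_iff.1 h3
    obtain ⟨y', hy1, hy2⟩ := hpert y x₀ hx₀P hx₀A ((inner ℝ x₀ cstar : ℝ) - 1) ε hε
    have h4 := hball (show dist y' y < ε by rw [dist_eq_norm]; exact hy1)
    exact absurd hy2 (not_le.2 h4)
  · -- subdifferential is empty everywhere
    intro bb
    rw [Set.eq_empty_iff_forall_notMem]
    intro ys hys
    obtain ⟨r, hvr, hsub⟩ := hys
    have hlt : v bb < ⊤ := by rw [hvr]; exact EReal.coe_lt_top r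
    obtain ⟨x₀, hx₀P, hx₀A⟩ := hfeas bb hlt
    obtain ⟨n, hn⟩ := hsel ys
    have hcpos : 0 < η n * ((inner ℝ (b (2*n)) ys : ℝ) + μ n) := mul_pos (hη0 n) hn
    set cp : ℝ := η n * ((inner ℝ (b (2*n)) ys : ℝ) + μ n) with hcp
    set r₀ : ℝ := (inner ℝ x₀ cstar : ℝ) with hr₀
    set t : ℝ := max 0 (r₀ - r + 1) / cp with htdef
    have ht0 : 0 ≤ t := div_nonneg (le_max_left _ _) hcpos.le
    have htc : t * cp = max 0 (r₀ - r + 1) := div_mul_cancel₀ _ (ne_of_gt hcpos)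
    have hPx := hPadd x₀ hx₀P {n} (fun _ => t) (fun _ => ht0)
    have hAx := hAadd x₀ bb hx₀A {n} (fun _ => t)
    have hvalx := hval x₀ {n} (fun _ => t)
    simp only [Finset.sum_singleton] at hPx hAx hvalx
    have hvley : v (bb + (t * η n) • b (2*n)) ≤ ((r₀ - t * (μ n * η n) : ℝ) : EReal) := by
      rw [hv_feas _ _ hPx hAx]
      exact EReal.coe_le_coe_iff.2 (le_of_eq hvalx)
    have hs := hsub (bb + (t * η n) • b (2*n))
    have hyin : (inner ℝ ((bb + (t * η n) • b (2*n)) - bb) ys : ℝ)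
        = t * η n * (inner ℝ (b (2*n)) ys : ℝ) := by
      rw [add_sub_cancel_left, real_inner_smul_left]
    rw [hyin] at hs
    have hfin := le_trans hs hvley
    have hreal : t * η n * (inner ℝ (b (2*n)) ys : ℝ) + r ≤ r₀ - t * (μ n * η n) :=
      EReal.coe_le_coe_iff.1 hfin
    have hge : r₀ - r + 1 ≤ t * cp := htc ▸ le_max_right _ _
    rw [hcp] at hge
    nlinarith
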